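/- Let $f: D^m \to \mathbb{R}$ be separately symmetric in its first $v$ variables and in its last $m-v$ variables, where $D = \{d_1,\ldots,d_K\}$ and $1 \leq v \leq m-1$. Then the canonical symmetrization $\tilde{f}(\mathbf{x}_m) = \frac{1}{m!}\sum_{\pi \in \mathfrak{S}_m} f(x_{\pi(1)},\ldots,x_{\pi(m)})$ is constant on each orbit $C(m, \mathbf{z}_K)$ and, for $\mathbf{x}_m \in C(m,\mathbf{z}_K)$, equals the weighted average $\tilde{f}(\mathbf{x}_m) = \frac{\sum_{(*)} \binom{v}{k_1,\ldots,k_{K-1}}\binom{m-v}{z_1-k_1,\ldots,z_{K-1}-k_{K-1}} f_{v,m-v}((k_1,\ldots,k_{K-1}),(z_1-k_1,\ldots,z_K-k_K))}{\sum_{(*)} \binom{v}{k_1,\ldots,k_{K-1}}\binom{m-v}{z_1-k_1,\ldots,z_{K-1}-k_{K-1}}}$, where the sum is over all $(m,v,\mathbf{z}_K)$-coherent vectors $(k_1,\ldots,k_{K-1})$. -/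

import Mathlib

open Finset

section Aux

lemma cnt_comp_equiv' {n K : ℕ} (w : Fin n → Fin K) (e : Equiv.Perm (Fin n)) (j : Fin K) :
    (univ.filter fun i => w (e i) = j).card = (univ.filter fun i => w i = j).card := by
  apply Finset.card_equiv e
  intro i
  simp

lemma exists_comp_eq' {n : ℕ} {α : Type*} [DecidableEq α] (a b : Fin n → α)
    (h : ∀ j, (univ.filter fun i => a i = j).card = (univ.filter fun i => b i = j).card) :
    ∃ e : Equiv.Perm (Fin n), ∀ t, a (e t) = b t := by
  have hcard : ∀ j : α, Fintype.card {i // b i = j} = Fintype.card {i // a i = j} := by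
    intro j; rw [Fintype.card_subtype, Fintype.card_subtype, h]
  classical
  let F : ∀ j, {i // b i = j} ≃ {i // a i = j} := fun j => Fintype.equivOfCardEq (hcard j)
  refine ⟨(Equiv.sigmaFiberEquiv b).symm.trans
    ((Equiv.sigmaCongrRight F).trans (Equiv.sigmaFiberEquiv a)), fun i => ?_⟩
  exact (F (b i) ⟨i, rfl⟩).2

lemma card_comp_fiber' {n K : ℕ} (a b : Fin n → Fin K)
    (h : ∀ j, (univ.filter fun i => a i = j).card = (univ.filter fun i => b i = j).card) :
    (univ.filter fun σ : Equiv.Perm (Fin n) => (fun i => a (σ i)) = b).card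
      = ∏ j, Nat.factorial (univ.filter fun i => a i = j).card := by
  classical
  obtain ⟨e, he⟩ := exists_comp_eq' a b h
  have key : (univ.filter fun σ : Equiv.Perm (Fin n) => (fun i => a (σ i)) = b).card
      = (univ.filter fun σ : Equiv.Perm (Fin n) => (fun i => a (σ i)) = a).card := by
    apply Finset.card_bij' (fun σ _ => σ * e⁻¹) (fun σ _ => σ * e)
    · intro σ hσ
      simp only [mem_filter, mem_univ, true_and] at hσ ⊢
      funext t
      have h1 := congrFun hσ (e⁻¹ t)
      have h2 := he (e⁻¹ t)
      show a (σ (e⁻¹ t)) = a t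
      rw [h1, ← h2]
      simp
    · intro σ hσ
      simp only [mem_filter, mem_univ, true_and] at hσ ⊢
      funext t
      have h1 := congrFun hσ (e t)
      have h2 := he t
      show a (σ (e t)) = b t
      rw [h1]
      exact h2
    · intro σ _; simp [mul_assoc]
    · intro σ _; simp [mul_assoc]
  have hstab : (univ.filter fun σ : Equiv.Perm (Fin n) => (fun i => a (σ i)) = a).card
      = (univ.filter fun σ : Equiv.Perm (Fin n) => a ∘ σ = a).card := rfl
  rw [key, hstab, ← Fintype.card_subtype, DomMulAct.stabilizer_card a]
  exact Finset.prod_congr rfl fun j _ => by rw [Fintype.card_subtype]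

lemma sum_cnt' {n K : ℕ} (u : Fin n → Fin K) :
    ∑ j, (univ.filter fun i => u i = j).card = n := by
  have := Finset.card_eq_sum_card_fiberwise
    (f := u) (s := univ) (t := univ) (fun i _ => mem_univ _)
  simpa using this.symm

lemma card_cnt_class' {n K : ℕ} (u0 : Fin n → Fin K) :
    (univ.filter fun u : Fin n → Fin K =>
        ∀ j, (univ.filter fun i => u i = j).card = (univ.filter fun i => u0 i = j).card).card
      = Nat.multinomial univ (fun j => (univ.filter fun i => u0 i = j).card) := by
  classical
  set W := univ.filter fun u : Fin n → Fin K =>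
      ∀ j, (univ.filter fun i => u i = j).card = (univ.filter fun i => u0 i = j).card with hW
  have hmaps : ∀ σ : Equiv.Perm (Fin n), σ ∈ (univ : Finset (Equiv.Perm (Fin n))) →
      (fun i => u0 (σ i)) ∈ W := by
    intro σ _
    simp only [hW, mem_filter, mem_univ, true_and]
    intro j
    exact cnt_comp_equiv' u0 σ j
  have h1 := Finset.card_eq_sum_card_fiberwise
    (f := fun σ : Equiv.Perm (Fin n) => fun i => u0 (σ i)) (s := univ) (t := W) hmaps
  have h0 : (univ : Finset (Equiv.Perm (Fin n))).card = n.factorial := by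
    rw [Finset.card_univ, Fintype.card_perm, Fintype.card_fin]
  have hfact : n.factorial
      = W.card * ∏ j, Nat.factorial (univ.filter fun i => u0 i = j).card := by
    rw [← h0, h1, Finset.sum_congr rfl (fun w hw => ?_), Finset.sum_const, smul_eq_mul]
    simp only [hW, mem_filter, mem_univ, true_and] at hw
    exact card_comp_fiber' u0 w (fun j => (hw j).symm)
  have hspec := Nat.multinomial_spec (univ : Finset (Fin K))
      (fun j => (univ.filter fun i => u0 i = j).card)
  rw [sum_cnt' u0] at hspec
  have hpos : 0 < ∏ j, Nat.factorial (univ.filter fun i => u0 i = j).card :=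
    Finset.prod_pos fun j _ => Nat.factorial_pos _
  apply Nat.eq_of_mul_eq_mul_right hpos
  rw [← hfact, ← hspec, mul_comm]

def Eq' {m v : ℕ} (hv : v ≤ m) : Fin v ⊕ Fin (m - v) ≃ Fin m :=
  finSumFinEquiv.trans (finCongr (Nat.add_sub_cancel' hv))

lemma hEl' {m v : ℕ} (hv : v ≤ m) (i : Fin v) : ((Eq' hv (Sum.inl i) : Fin m) : ℕ) = i := by
  simp [Eq']

lemma hEr' {m v : ℕ} (hv : v ≤ m) (i : Fin (m - v)) :
    ((Eq' hv (Sum.inr i) : Fin m) : ℕ) = v + i := by simp [Eq']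

lemma cnt_block_left' {m v K : ℕ} (hv : v ≤ m) (w : Fin m → Fin K) (j : Fin K) :
    (univ.filter fun i : Fin v => w (Eq' hv (Sum.inl i)) = j).card
      = (univ.filter fun t : Fin m => (t : ℕ) < v ∧ w t = j).card := by
  apply Finset.card_bij (fun i _ => Eq' hv (Sum.inl i))
  · intro i hi
    simp only [mem_filter, mem_univ, true_and] at hi ⊢
    exact ⟨by rw [hEl']; exact i.isLt, hi⟩
  · intro i _ i' _ h
    exact Sum.inl.inj ((Eq' hv).injective h)
  · intro t ht
    simp only [mem_filter, mem_univ, true_and] at ht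
    refine ⟨⟨(t : ℕ), ht.1⟩, ?_, ?_⟩
    · have : Eq' hv (Sum.inl ⟨(t : ℕ), ht.1⟩) = t := Fin.ext (by rw [hEl'])
      simp only [mem_filter, mem_univ, true_and, this]
      exact ht.2
    · exact Fin.ext (by rw [hEl'])

lemma cnt_block_right' {m v K : ℕ} (hv : v ≤ m) (w : Fin m → Fin K) (j : Fin K) :
    (univ.filter fun i : Fin (m - v) => w (Eq' hv (Sum.inr i)) = j).card
      = (univ.filter fun t : Fin m => v ≤ (t : ℕ) ∧ w t = j).card := by
  apply Finset.card_bij (fun i _ => Eq' hv (Sum.inr i))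
  · intro i hi
    simp only [mem_filter, mem_univ, true_and] at hi ⊢
    exact ⟨by rw [hEr']; omega, hi⟩
  · intro i _ i' _ h
    exact Sum.inr.inj ((Eq' hv).injective h)
  · intro t ht
    simp only [mem_filter, mem_univ, true_and] at ht
    have hlt : (t : ℕ) - v < m - v := by
      have := t.isLt; omega
    refine ⟨⟨(t : ℕ) - v, hlt⟩, ?_, ?_⟩
    · have : Eq' hv (Sum.inr ⟨(t : ℕ) - v, hlt⟩) = t := Fin.ext (by rw [hEr']; simp; omega)
      simp only [mem_filter, mem_univ, true_and, this]
      exact ht.2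
    · exact Fin.ext (by rw [hEr']; simp; omega)

lemma card_block_class' {m v K : ℕ} (hv : v ≤ m) (k l : Fin K → ℕ) :
    (univ.filter fun w : Fin m → Fin K =>
        (∀ j, (univ.filter fun t : Fin m => (t : ℕ) < v ∧ w t = j).card = k j) ∧
        (∀ j, (univ.filter fun t : Fin m => v ≤ (t : ℕ) ∧ w t = j).card = l j)).card
      = (univ.filter fun u : Fin v → Fin K =>
            ∀ j, (univ.filter fun i => u i = j).card = k j).card
        * (univ.filter fun u : Fin (m - v) → Fin K =>
            ∀ j, (univ.filter fun i => u i = j).card = l j).card := by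
  classical
  rw [← Finset.card_product]
  apply Finset.card_bij'
    (fun w _ => (fun i => w (Eq' hv (Sum.inl i)), fun i => w (Eq' hv (Sum.inr i))))
    (fun p _ => fun t => Sum.elim p.1 p.2 ((Eq' hv).symm t))
  · intro w hw
    simp only [mem_filter, mem_univ, true_and, Finset.mem_product] at hw ⊢
    constructor
    · intro j; rw [cnt_block_left' hv]; exact hw.1 j
    · intro j; rw [cnt_block_right' hv]; exact hw.2 j
  · intro p hp
    simp only [mem_filter, mem_univ, true_and, Finset.mem_product] at hp ⊢
    constructor
    · intro j
      rw [← cnt_block_left' hv]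
      simpa using hp.1 j
    · intro j
      rw [← cnt_block_right' hv]
      simpa using hp.2 j
  · intro w _
    funext t
    conv_rhs => rw [← (Eq' hv).apply_symm_apply t]
    rcases h : (Eq' hv).symm t with i | i <;> simp
  · intro p _
    ext i <;> simp

end Aux



/-- Number of coordinates of `x` equal to `j`. -/
def cnt {n K : ℕ} (x : Fin n → Fin K) (j : Fin K) : ℕ :=
  (Finset.univ.filter fun h => x h = j).card

/-- The set of `(m,v,z)`-coherent occupation vectors: vectors `k : Fin K → ℕ` with
`∑ kᵢ = v` and `kᵢ ≤ zᵢ` for all `i`. -/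
def coherent (K v : ℕ) (z : Fin K → ℕ) : Finset (Fin K → ℕ) :=
  (Finset.Nat.antidiagonalTuple K v).filter fun k => ∀ i, k i ≤ z i

/-- The weight `(v choose k₁,…,k_{K-1}) ⋅ (m-v choose z₁-k₁,…,z_{K-1}-k_{K-1})`
attached to a coherent vector `k`. -/
def weight {K : ℕ} (z k : Fin K → ℕ) : ℕ :=
  Nat.multinomial Finset.univ k * Nat.multinomial Finset.univ (fun i => z i - k i)

/-- Symmetrization lemma (Lemma 2 of the paper): if `f : D^m → ℝ` is separately symmetric
in its first `v` and last `m-v` variables, then for `x` in the orbit `C(m,z)` the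
canonical symmetrization `f̃(x) = (1/m!) ∑_σ f(x∘σ)` equals the weighted average of the
common values `f_{v,m-v}(k, z-k)` over `(m,v,z)`-coherent vectors `k`; here
`y k` is any vector whose first `v` coordinates contain `kᵢ` entries equal to `dᵢ`
and whose last `m-v` coordinates contain `zᵢ-kᵢ` entries equal to `dᵢ`. -/
theorem symmetrization_lemma (K m v : ℕ) (hK : 1 ≤ K) (hm : 2 ≤ m)
    (hv1 : 1 ≤ v) (hvm : v ≤ m - 1)
    (f : (Fin m → Fin K) → ℝ)
    (hsym : ∀ σ : Equiv.Perm (Fin m),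
      (∀ i : Fin m, ((i : ℕ) < v ↔ ((σ i : ℕ) < v))) → ∀ x, f (x ∘ σ) = f x)
    (z : Fin K → ℕ) (hz : ∑ i, z i = m)
    (x : Fin m → Fin K) (hx : ∀ j, cnt x j = z j)
    (y : (Fin K → ℕ) → Fin m → Fin K)
    (hy : ∀ k ∈ coherent K v z,
      (∀ j, (Finset.univ.filter fun t : Fin m => (t : ℕ) < v ∧ y k t = j).card = k j) ∧
      (∀ j, (Finset.univ.filter fun t : Fin m => v ≤ (t : ℕ) ∧ y k t = j).card = z j - k j)) :
    ((1 : ℝ) / m.factorial) * ∑ σ : Equiv.Perm (Fin m), f (x ∘ σ)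
      = (∑ k ∈ coherent K v z, (weight z k : ℝ) * f (y k)) /
        (∑ k ∈ coherent K v z, (weight z k : ℝ)) := by
  classical
  have hvm' : v ≤ m := by omega
  set T : Equiv.Perm (Fin m) → Fin K → ℕ :=
    fun σ j => (univ.filter fun t : Fin m => (t : ℕ) < v ∧ x (σ t) = j).card with hT
  have hcntσ : ∀ (σ : Equiv.Perm (Fin m)) (j : Fin K),
      (univ.filter fun t => x (σ t) = j).card = z j := by
    intro σ j
    have h1 : (univ.filter fun t => x (σ t) = j).card
        = (univ.filter fun i => x i = j).card := cnt_comp_equiv' x σ j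
    exact h1.trans (hx j)
  have hsplit : ∀ (w : Fin m → Fin K) (j : Fin K),
      (univ.filter fun t : Fin m => (t : ℕ) < v ∧ w t = j).card
        + (univ.filter fun t : Fin m => v ≤ (t : ℕ) ∧ w t = j).card
        = (univ.filter fun t : Fin m => w t = j).card := by
    intro w j
    have h := Finset.card_filter_add_card_filter_not
      (s := univ.filter fun t : Fin m => w t = j) (p := fun t => (t : ℕ) < v)
    rw [Finset.filter_filter, Finset.filter_filter] at h
    rw [← h]
    congr 1
    · exact congrArg Finset.card (Finset.filter_congr (fun t _ => by tauto))
    · exact congrArg Finset.card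
        (Finset.filter_congr (fun t _ => by simp only [not_lt]; tauto))
  have hvcard : (univ.filter fun t : Fin m => (t : ℕ) < v).card = v := by
    have h := cnt_block_left' (K := K) hvm' (fun _ => ⟨0, hK⟩) ⟨0, hK⟩
    simpa using h.symm
  have hTmem : ∀ σ, T σ ∈ coherent K v z := by
    intro σ
    rw [coherent, mem_filter, Finset.Nat.mem_antidiagonalTuple]
    refine ⟨?_, ?_⟩
    · have h := Finset.card_eq_sum_card_fiberwise
        (s := univ.filter fun t : Fin m => (t : ℕ) < v) (t := univ)
        (f := fun t => x (σ t)) (fun t _ => mem_univ _)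
      rw [hvcard] at h
      rw [h]
      apply Finset.sum_congr rfl
      intro j _
      rw [Finset.filter_filter]
    · intro j
      have hsub : (univ.filter fun t : Fin m => (t : ℕ) < v ∧ x (σ t) = j)
          ⊆ (univ.filter fun t => x (σ t) = j) := by
        intro t ht
        simp only [mem_filter, mem_univ, true_and] at ht ⊢
        exact ht.2
      calc T σ j ≤ (univ.filter fun t => x (σ t) = j).card := Finset.card_le_card hsub
        _ = z j := hcntσ σ j
  have hl : ∀ (σ : Equiv.Perm (Fin m)) (j : Fin K),
      (univ.filter fun t : Fin m => v ≤ (t : ℕ) ∧ x (σ t) = j).card = z j - T σ j := by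
    intro σ j
    have h : (univ.filter fun t : Fin m => (t : ℕ) < v ∧ x (σ t) = j).card
        + (univ.filter fun t : Fin m => v ≤ (t : ℕ) ∧ x (σ t) = j).card
        = (univ.filter fun t : Fin m => x (σ t) = j).card := hsplit (fun t => x (σ t)) j
    rw [hcntσ σ j] at h
    have hTj : T σ j = (univ.filter fun t : Fin m => (t : ℕ) < v ∧ x (σ t) = j).card := rfl
    omega
  have hfy : ∀ σ : Equiv.Perm (Fin m), f (x ∘ σ) = f (y (T σ)) := by
    intro σ
    obtain ⟨hy1, hy2⟩ := hy (T σ) (hTmem σ)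
    have hcc : ∀ p : Fin K × Bool,
        (univ.filter fun t : Fin m => (x (σ t), decide ((t : ℕ) < v)) = p).card
          = (univ.filter fun t : Fin m => (y (T σ) t, decide ((t : ℕ) < v)) = p).card := by
      rintro ⟨j, b⟩
      cases b
      · have e1 : (univ.filter fun t : Fin m => (x (σ t), decide ((t : ℕ) < v)) = (j, false))
            = univ.filter fun t : Fin m => v ≤ (t : ℕ) ∧ x (σ t) = j := by
          apply Finset.filter_congr; intro t _
          simp [Prod.ext_iff, not_lt, and_comm]
        have e2 : (univ.filter fun t : Fin m => (y (T σ) t, decide ((t : ℕ) < v)) = (j, false))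
            = univ.filter fun t : Fin m => v ≤ (t : ℕ) ∧ y (T σ) t = j := by
          apply Finset.filter_congr; intro t _
          simp [Prod.ext_iff, not_lt, and_comm]
        rw [e1, e2, hl σ j, hy2 j]
      · have e1 : (univ.filter fun t : Fin m => (x (σ t), decide ((t : ℕ) < v)) = (j, true))
            = univ.filter fun t : Fin m => (t : ℕ) < v ∧ x (σ t) = j := by
          apply Finset.filter_congr; intro t _
          simp [Prod.ext_iff, and_comm]
        have e2 : (univ.filter fun t : Fin m => (y (T σ) t, decide ((t : ℕ) < v)) = (j, true))
            = univ.filter fun t : Fin m => (t : ℕ) < v ∧ y (T σ) t = j := by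
          apply Finset.filter_congr; intro t _
          simp [Prod.ext_iff, and_comm]
        rw [e1, e2, hy1 j]
    obtain ⟨e, he⟩ := exists_comp_eq' _ _ hcc
    have hb : ∀ i : Fin m, ((i : ℕ) < v ↔ ((e i : ℕ) < v)) := by
      intro i
      have := congrArg Prod.snd (he i)
      simp only at this
      exact (decide_eq_decide.mp this).symm
    have hval : ∀ t, x (σ (e t)) = y (T σ) t := by
      intro t
      have := congrArg Prod.fst (he t)
      simpa using this
    have h1 := hsym e hb (x ∘ σ)
    rw [← h1]
    exact congrArg f (funext fun t => hval t)
  have hfibercard : ∀ k ∈ coherent K v z,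
      (univ.filter fun σ : Equiv.Perm (Fin m) => T σ = k).card
        = weight z k * ∏ j, (z j).factorial := by
    intro k hk
    obtain ⟨hy1, hy2⟩ := hy k hk
    have hkz : ∀ j, k j ≤ z j := (mem_filter.mp hk).2
    set Wk := univ.filter fun w : Fin m → Fin K =>
        (∀ j, (univ.filter fun t : Fin m => (t : ℕ) < v ∧ w t = j).card = k j) ∧
        (∀ j, (univ.filter fun t : Fin m => v ≤ (t : ℕ) ∧ w t = j).card = z j - k j) with hWk
    have hWcnt : ∀ w ∈ Wk, ∀ j, (univ.filter fun i => w i = j).card = z j := by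
      intro w hw j
      rw [hWk, mem_filter] at hw
      have h := hsplit w j
      rw [hw.2.1 j, hw.2.2 j] at h
      have := hkz j
      omega
    have hmaps : ∀ σ ∈ (univ.filter fun σ : Equiv.Perm (Fin m) => T σ = k),
        (fun t => x (σ t)) ∈ Wk := by
      intro σ hσ
      rw [mem_filter] at hσ
      rw [hWk, mem_filter]
      refine ⟨mem_univ _, fun j => ?_, fun j => ?_⟩
      · exact congrFun hσ.2 j
      · have h := hl σ j
        rw [hσ.2] at h
        exact h
    have hcard := Finset.card_eq_sum_card_fiberwise
      (s := univ.filter fun σ : Equiv.Perm (Fin m) => T σ = k)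
      (t := Wk) (f := fun σ => fun t => x (σ t)) (fun σ hσ => hmaps σ hσ)
    have hinner : ∀ w ∈ Wk,
        ((univ.filter fun σ : Equiv.Perm (Fin m) => T σ = k).filter
          (fun σ => (fun t => x (σ t)) = w)).card = ∏ j, (z j).factorial := by
      intro w hw
      have hset : (univ.filter fun σ : Equiv.Perm (Fin m) => T σ = k).filter
          (fun σ => (fun t => x (σ t)) = w)
          = univ.filter (fun σ : Equiv.Perm (Fin m) => (fun t => x (σ t)) = w) := by
        rw [Finset.filter_filter]
        apply Finset.filter_congr
        intro σ _
        constructor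
        · exact fun h => h.2
        · intro h
          refine ⟨?_, h⟩
          subst h
          rw [hWk, mem_filter] at hw
          funext j
          exact hw.2.1 j
      rw [hset, card_comp_fiber' x w (fun j => (hx j).trans (hWcnt w hw j).symm)]
      exact Finset.prod_congr rfl fun j _ => congrArg Nat.factorial (hx j)
    rw [hcard, Finset.sum_congr rfl hinner, Finset.sum_const, smul_eq_mul]
    congr 1
    have hsplitW := card_block_class' (K := K) hvm' k (fun j => z j - k j)
    rw [hWk, hsplitW]
    have hu1 : ∀ j : Fin K,
        (univ.filter fun i : Fin v => y k (Eq' hvm' (Sum.inl i)) = j).card = k j :=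
      fun j => (cnt_block_left' hvm' (y k) j).trans (hy1 j)
    have hu2 : ∀ j : Fin K,
        (univ.filter fun i : Fin (m - v) => y k (Eq' hvm' (Sum.inr i)) = j).card = z j - k j :=
      fun j => (cnt_block_right' hvm' (y k) j).trans (hy2 j)
    have hW1 : (univ.filter fun u : Fin v → Fin K =>
          ∀ j, (univ.filter fun i => u i = j).card = k j).card
        = Nat.multinomial univ k := by
      have hfc : (univ.filter fun u : Fin v → Fin K =>
            ∀ j, (univ.filter fun i => u i = j).card = k j)
          = (univ.filter fun u : Fin v → Fin K =>
            ∀ j, (univ.filter fun i => u i = j).card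
              = (univ.filter fun i => y k (Eq' hvm' (Sum.inl i)) = j).card) := by
        apply Finset.filter_congr
        intro u _
        constructor
        · intro h j; rw [h j, hu1 j]
        · intro h j; rw [h j, hu1 j]
      rw [hfc, card_cnt_class' (fun i => y k (Eq' hvm' (Sum.inl i)))]
      exact Nat.multinomial_congr (fun j _ => hu1 j)
    have hW2 : (univ.filter fun u : Fin (m - v) → Fin K =>
          ∀ j, (univ.filter fun i => u i = j).card = z j - k j).card
        = Nat.multinomial univ (fun j => z j - k j) := by
      have hfc : (univ.filter fun u : Fin (m - v) → Fin K =>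
            ∀ j, (univ.filter fun i => u i = j).card = z j - k j)
          = (univ.filter fun u : Fin (m - v) → Fin K =>
            ∀ j, (univ.filter fun i => u i = j).card
              = (univ.filter fun i => y k (Eq' hvm' (Sum.inr i)) = j).card) := by
        apply Finset.filter_congr
        intro u _
        constructor
        · intro h j; rw [h j, hu2 j]
        · intro h j; rw [h j, hu2 j]
      rw [hfc, card_cnt_class' (fun i => y k (Eq' hvm' (Sum.inr i)))]
      exact Nat.multinomial_congr (fun j _ => hu2 j)
    rw [hW1, hW2]
    rfl
  -- main computation
  have hsum1 : ∑ σ : Equiv.Perm (Fin m), f (x ∘ σ)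
      = ∑ k ∈ coherent K v z,
          (((univ.filter fun σ : Equiv.Perm (Fin m) => T σ = k).card : ℝ)) * f (y k) := by
    rw [← Finset.sum_fiberwise_of_maps_to (g := T) (fun σ _ => hTmem σ) (fun σ => f (x ∘ σ))]
    apply Finset.sum_congr rfl
    intro k hk
    rw [Finset.sum_congr rfl (fun σ hσ => (hfy σ).trans (by rw [(mem_filter.mp hσ).2])),
      Finset.sum_const, nsmul_eq_mul]
  have hM : m.factorial = (∑ k ∈ coherent K v z, weight z k) * ∏ j, (z j).factorial := by
    have h0 : (univ : Finset (Equiv.Perm (Fin m))).card = m.factorial := by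
      rw [card_univ, Fintype.card_perm, Fintype.card_fin]
    rw [← h0, Finset.card_eq_sum_card_fiberwise (f := T) (t := coherent K v z)
      (fun σ _ => hTmem σ), Finset.sum_congr rfl hfibercard, ← Finset.sum_mul]
  have hterm : ∀ k ∈ coherent K v z,
      (((univ.filter fun σ : Equiv.Perm (Fin m) => T σ = k).card : ℝ)) * f (y k)
        = ((∏ j, (z j).factorial : ℕ) : ℝ) * ((weight z k : ℝ) * f (y k)) := by
    intro k hk
    rw [hfibercard k hk]
    push_cast
    ring
  rw [hsum1, Finset.sum_congr rfl hterm, ← Finset.mul_sum]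
  have hMr : (m.factorial : ℝ)
      = (∑ k ∈ coherent K v z, (weight z k : ℝ)) * ((∏ j, (z j).factorial : ℕ) : ℝ) := by
    exact_mod_cast congrArg (Nat.cast : ℕ → ℝ) hM
  have hPne : ((∏ j, (z j).factorial : ℕ) : ℝ) ≠ 0 := by
    exact_mod_cast (Finset.prod_pos fun j _ => Nat.factorial_pos (z j)).ne'
  have hSne : (∑ k ∈ coherent K v z, (weight z k : ℝ)) ≠ 0 := by
    intro h0
    rw [h0, zero_mul] at hMr
    exact (Nat.cast_ne_zero (R := ℝ)).mpr m.factorial_pos.ne' hMr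
  rw [hMr]
  field_simp
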